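/- (Automatic continuity) Let I be a Riesz ideal and unital subalgebra of C(X, ℝ) containing a nonnegative proper function. Then every positive linear map Φ : I → V into an Archimedean ordered vector space V is strictly I-continuous: for every decreasing sequence (f_k) in I with pointwise infimum 0, the infimum of (Φ(f_k)) in V is 0. -/

import Mathlib

variable {X : Type*} [TopologicalSpace X]

def IsRieszIdeal (I : Set C(X, ℝ)) : Prop :=
  (0 : C(X, ℝ)) ∈ I ∧ (∀ f g : C(X, ℝ), f ∈ I → g ∈ I → f + g ∈ I) ∧
    (∀ (c : ℝ) (f : C(X, ℝ)), f ∈ I → c • f ∈ I) ∧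
    (∀ f g : C(X, ℝ), g ∈ I → (∀ x, |f x| ≤ |g x|) → f ∈ I)

/-- A decreasing sequence of continuous functions with pointwise infimum `0`. -/
def DecrPtwInfZero (f : ℕ → C(X, ℝ)) : Prop :=
  (∀ k, f (k + 1) ≤ f k) ∧ ∀ x, IsGLB (Set.range fun k => f k x) 0

/-- The sequence `g` is strictly `I`-convergent to `g'`. -/
def StrictConvTo (I : Set C(X, ℝ)) (g : ℕ → C(X, ℝ)) (g' : C(X, ℝ)) : Prop :=
  ∃ f : ℕ → C(X, ℝ), (∀ k, f k ∈ I) ∧ DecrPtwInfZero f ∧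
    ∀ k, ∃ N, ∀ n ≥ N, ∀ x, |g' x - g n x| ≤ f k x

/-- The sequence `g` is a strict `I`-Cauchy sequence. -/
def StrictCauchy (I : Set C(X, ℝ)) (g : ℕ → C(X, ℝ)) : Prop :=
  ∃ f : ℕ → C(X, ℝ), (∀ k, f k ∈ I) ∧ DecrPtwInfZero f ∧
    ∀ k, ∃ N, ∀ n ≥ N, ∀ x, |g n x - g N x| ≤ f k x

def IClosed (I : Set C(X, ℝ)) (S : Set C(X, ℝ)) : Prop :=
  ∀ (g : ℕ → C(X, ℝ)) (g' : C(X, ℝ)), (∀ n, g n ∈ S) → StrictConvTo I g g' → g' ∈ S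

def IClosure (I : Set C(X, ℝ)) (S : Set C(X, ℝ)) : Set C(X, ℝ) :=
  ⋂₀ {C | C ⊆ I ∧ S ⊆ C ∧ IClosed I C}

theorem automatic_continuity
    (X : Type*) [TopologicalSpace X] [LocallyCompactSpace X] [T2Space X] [LindelofSpace X]
    (V : Type*) [AddCommGroup V] [PartialOrder V] [IsOrderedAddMonoid V] [Module ℝ V] [PosSMulStrictMono ℝ V]
    (harch : ∀ v w : V, 0 ≤ w → (∀ ε : ℝ, 0 < ε → v ≤ ε • w) → v ≤ 0)
    (I : Set C(X, ℝ)) (hI : IsRieszIdeal I)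
    (hone : (1 : C(X, ℝ)) ∈ I)
    (hmul : ∀ f g : C(X, ℝ), f ∈ I → g ∈ I → f * g ∈ I)
    (p : C(X, ℝ)) (hpI : p ∈ I) (hp0 : 0 ≤ p)
    (hproper : ∀ a b : ℝ, a ≤ b → IsCompact (p ⁻¹' Set.Icc a b))
    (Φ : C(X, ℝ) → V)
    (hΦadd : ∀ f g : C(X, ℝ), f ∈ I → g ∈ I → Φ (f + g) = Φ f + Φ g)
    (hΦsmul : ∀ (c : ℝ) (f : C(X, ℝ)), f ∈ I → Φ (c • f) = c • Φ f)
    (hΦpos : ∀ f : C(X, ℝ), f ∈ I → 0 ≤ f → 0 ≤ Φ f) :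
    ∀ f : ℕ → C(X, ℝ), (∀ k, f k ∈ I) → DecrPtwInfZero f →
      IsGLB (Set.range fun k => Φ (f k)) 0 := by
  obtain ⟨hI0, hIadd, hIsmul, hIabs⟩ := hI
  intro f hfI hf
  obtain ⟨hdec, hglb⟩ := hf
  have hanti : Antitone f := antitone_nat_of_succ_le hdec
  have hfnn : ∀ k x, 0 ≤ f k x := fun k x => (hglb x).1 ⟨k, rfl⟩
  have hsub : ∀ g h : C(X,ℝ), g ∈ I → h ∈ I → g - h ∈ I := by
    intro g h hg hh
    have := hIadd g ((-1:ℝ) • h) hg (hIsmul _ _ hh)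
    simpa [sub_eq_add_neg, neg_one_smul] using this
  have hmono : ∀ g h : C(X,ℝ), g ∈ I → h ∈ I → g ≤ h → Φ g ≤ Φ h := by
    intro g h hg hh hle
    have hhg : h - g ∈ I := hsub h g hh hg
    have h1 : Φ h = Φ g + Φ (h - g) := by
      have := hΦadd g (h - g) hg hhg
      simpa using this
    have h2 : 0 ≤ Φ (h - g) := hΦpos _ hhg (sub_nonneg.mpr hle)
    calc Φ g = Φ g + 0 := by rw [add_zero]
      _ ≤ Φ g + Φ (h - g) := by exact add_le_add_right h2 _
      _ = Φ h := h1.symm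
  set w0 : C(X,ℝ) := 1 + p * f 0 with hw0
  have hw0I : w0 ∈ I := hIadd _ _ hone (hmul p (f 0) hpI (hfI 0))
  have hw0nn : (0:C(X,ℝ)) ≤ w0 := by
    rw [ContinuousMap.le_def]
    intro x
    simp only [hw0, ContinuousMap.add_apply, ContinuousMap.mul_apply,
      ContinuousMap.one_apply, ContinuousMap.zero_apply]
    have h1 : (0:ℝ) ≤ p x := by simpa using ContinuousMap.le_def.mp hp0 x
    have h2 : (0:ℝ) ≤ f 0 x := hfnn 0 x
    nlinarith
  have key : ∀ ε : ℝ, 0 < ε → ∃ N, f N ≤ ε • w0 := by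
    intro ε hε
    have hK : IsCompact (p ⁻¹' Set.Icc 0 (1/ε)) :=
      hproper 0 (1/ε) (by positivity)
    have hx : ∀ x : X, ∃ k, f k x < ε := by
      intro x
      by_contra h
      push_neg at h
      have : ε ≤ 0 := (hglb x).2 (by rintro y ⟨k, rfl⟩; exact h k)
      linarith
    choose k hk using hx
    obtain ⟨t, ht⟩ := hK.elim_finite_subcover (fun x => (f (k x)) ⁻¹' Set.Iio ε)
      (fun x => isOpen_Iio.preimage (f (k x)).continuous)
      (fun y hy => Set.mem_iUnion.mpr ⟨y, hk y⟩)
    refine ⟨t.sup k, ?_⟩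
    rw [ContinuousMap.le_def]
    intro x
    simp only [ContinuousMap.smul_apply, hw0, ContinuousMap.add_apply,
      ContinuousMap.mul_apply, ContinuousMap.one_apply, smul_eq_mul]
    have hpx : 0 ≤ p x := by simpa using hp0 x
    have hf0x : 0 ≤ f 0 x := hfnn 0 x
    by_cases hc : p x ≤ 1/ε
    · have hxK : x ∈ p ⁻¹' Set.Icc 0 (1/ε) := ⟨hpx, hc⟩
      obtain ⟨i, hit, hix⟩ := Set.mem_iUnion₂.mp (ht hxK)
      have h1 : f (t.sup k) x ≤ f (k i) x := hanti (Finset.le_sup hit) x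
      have h2 : f (k i) x < ε := hix
      nlinarith [mul_nonneg (mul_nonneg hε.le hpx) hf0x]
    · push_neg at hc
      have h1 : f (t.sup k) x ≤ f 0 x := hanti (Nat.zero_le _) x
      have h2 : 1 < ε * p x := by
        rw [div_lt_iff₀ hε] at hc
        nlinarith
      nlinarith
  constructor
  · rintro _ ⟨m, rfl⟩
    exact hΦpos _ (hfI m) (fun x => by simpa using hfnn m x)
  · intro v hv
    have hw : 0 ≤ Φ w0 := hΦpos _ hw0I hw0nn
    refine harch v (Φ w0) hw ?_
    intro ε hε
    obtain ⟨N, hN⟩ := key ε hε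
    calc v ≤ Φ (f N) := hv ⟨N, rfl⟩
      _ ≤ Φ (ε • w0) := hmono _ _ (hfI N) (hIsmul ε w0 hw0I) hN
      _ = ε • Φ w0 := hΦsmul ε w0 hw0I
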